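/- The number of distinct subgroups of (𝔽₂)^{2n} of order 2^m all of whose elements pairwise commute (i.e., totally isotropic subspaces of dimension m of a 2n-dimensional symplectic 𝔽₂-space) equals ∏_{k=0}^{m−1} (4^n/2^k − 2^k)/(2^m − 2^k), for 0 ≤ m ≤ n. -/

import Mathlib

/-- The phase space `(𝔽₂)^{2n}`, modeled as pairs of vectors in `𝔽₂ⁿ`. -/
abbrev V (n : ℕ) := (Fin n → ZMod 2) × (Fin n → ZMod 2)

/-- The standard symplectic bilinear form `ω((a,b),(c,d)) = a·d + b·c`. -/
def sympl {n : ℕ} (P Q : V n) : ZMod 2 :=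
  ∑ i, (P.1 i * Q.2 i + P.2 i * Q.1 i)

open Submodule Module Set

/-- `sympl` as a bilinear form. -/
def Bf (n : ℕ) : LinearMap.BilinForm (ZMod 2) (V n) :=
  LinearMap.mk₂ (ZMod 2) sympl
    (fun P P' Q => by
      simp only [sympl, Prod.fst_add, Prod.snd_add, Pi.add_apply]
      rw [← Finset.sum_add_distrib]
      exact Finset.sum_congr rfl fun i _ => by ring)
    (fun c P Q => by
      simp only [sympl, Prod.smul_fst, Prod.smul_snd, Pi.smul_apply, smul_eq_mul]
      rw [Finset.mul_sum]
      exact Finset.sum_congr rfl fun i _ => by ring)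
    (fun P Q Q' => by
      simp only [sympl, Prod.fst_add, Prod.snd_add, Pi.add_apply]
      rw [← Finset.sum_add_distrib]
      exact Finset.sum_congr rfl fun i _ => by ring)
    (fun c P Q => by
      simp only [sympl, Prod.smul_fst, Prod.smul_snd, Pi.smul_apply, smul_eq_mul]
      rw [Finset.mul_sum]
      exact Finset.sum_congr rfl fun i _ => by ring)

lemma Bf_apply {n : ℕ} (P Q : V n) : Bf n P Q = sympl P Q := rfl

lemma sympl_comm {n : ℕ} (P Q : V n) : sympl P Q = sympl Q P :=
  Finset.sum_congr rfl fun i _ => by ring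

lemma sympl_self {n : ℕ} (P : V n) : sympl P P = 0 := by
  unfold sympl
  rw [Finset.sum_eq_zero]
  intro i _
  rw [mul_comm]
  exact CharTwo.add_self_eq_zero _

lemma Bf_refl {n : ℕ} : (Bf n).IsRefl := fun P Q h => by
  rwa [Bf_apply, sympl_comm, ← Bf_apply]

lemma Bf_nondeg {n : ℕ} : (Bf n).Nondegenerate := by
  have key : ∀ P : V n, (∀ Q, Bf n P Q = 0) → P = 0 := by
    intro P h
    ext i
    · have := h (0, Pi.single i 1)
      simpa [Bf_apply, sympl, Pi.single_apply, Finset.sum_ite_eq'] using this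
    · have := h (Pi.single i 1, 0)
      simpa [Bf_apply, sympl, Pi.single_apply, Finset.sum_ite_eq'] using this
  exact ⟨key, fun P h => key P fun Q => by rw [Bf_apply, sympl_comm, ← Bf_apply]; exact h Q⟩

lemma finrank_V (n : ℕ) : Module.finrank (ZMod 2) (V n) = 2 * n := by
  simp [Module.finrank_prod, two_mul]

section
variable {n : ℕ}

lemma mem_orthogonal_span_range_iff {k : ℕ} (s : Fin k → V n) (v : V n) :
    v ∈ (Bf n).orthogonal (span (ZMod 2) (range s)) ↔ ∀ i, sympl (s i) v = 0 := by
  rw [LinearMap.BilinForm.mem_orthogonal_iff]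
  constructor
  · intro h i
    rw [← Bf_apply]
    exact h (s i) (subset_span (mem_range_self i))
  · intro h P hP
    induction hP using Submodule.span_induction with
    | mem x hx => obtain ⟨i, rfl⟩ := hx; rw [Bf_apply]; exact h i
    | zero => simp [LinearMap.BilinForm.IsOrtho]
    | add x y _ _ hx hy => simp [hx, hy]
    | smul c x _ hx => simp [hx]

lemma span_le_orthogonal {k : ℕ} (s : Fin k → V n)
    (h : ∀ i j, sympl (s i) (s j) = 0) :
    span (ZMod 2) (range s) ≤ (Bf n).orthogonal (span (ZMod 2) (range s)) := by
  rw [span_le]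
  rintro _ ⟨j, rfl⟩
  rw [SetLike.mem_coe, mem_orthogonal_span_range_iff]
  exact fun i => h i j

lemma isotropic_span {k : ℕ} (s : Fin k → V n)
    (h : ∀ i j, sympl (s i) (s j) = 0) :
    ∀ P ∈ span (ZMod 2) (range s), ∀ Q ∈ span (ZMod 2) (range s), sympl P Q = 0 := by
  intro P hP Q hQ
  have := span_le_orthogonal s h hQ
  rw [LinearMap.BilinForm.mem_orthogonal_iff] at this
  have := this P hP
  rwa [Bf_apply] at this

lemma nat_card_sigma {ι : Type*} [Fintype ι] (f : ι → Type*) [∀ i, Finite (f i)] :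
    Nat.card (Σ i, f i) = ∑ i : ι, Nat.card (f i) := by
  letI : ∀ i, Fintype (f i) := fun i => Fintype.ofFinite _
  simp [Nat.card_eq_fintype_card, Fintype.card_sigma]

lemma card_diff_submodule {M : Type*} [AddCommGroup M] [Module (ZMod 2) M] [Fintype M]
    (O W : Submodule (ZMod 2) M) (h : W ≤ O) :
    Nat.card {v : M // v ∈ O ∧ v ∉ W} = 2 ^ finrank (ZMod 2) O - 2 ^ finrank (ZMod 2) W := by
  classical
  have e : {v : M // v ∈ O ∧ v ∉ W} ≃ ((O : Set M) \ (W : Set M) : Set M) :=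
    Equiv.subtypeEquivRight (by intro v; simp [Set.mem_diff])
  rw [Nat.card_congr e, Nat.card_coe_set_eq, Set.ncard_diff h]
  have hO : (O : Set M).ncard = 2 ^ finrank (ZMod 2) O := by
    rw [← Nat.card_coe_set_eq, Nat.card_eq_fintype_card]
    have := card_eq_pow_finrank (K := ZMod 2) (V := O)
    rwa [ZMod.card] at this
  have hW : (W : Set M).ncard = 2 ^ finrank (ZMod 2) W := by
    rw [← Nat.card_coe_set_eq, Nat.card_eq_fintype_card]
    have := card_eq_pow_finrank (K := ZMod 2) (V := W)
    rwa [ZMod.card] at this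
  rw [hO, hW]

end

section
variable {n : ℕ}

abbrev IsoT (n k : ℕ) :=
  {s : Fin k → V n // LinearIndependent (ZMod 2) s ∧ ∀ i j, sympl (s i) (s j) = 0}

def isoEquivStep (n k : ℕ) : IsoT n (k + 1) ≃
    Σ s : IsoT n k, {v : V n // v ∈ (Bf n).orthogonal (span (ZMod 2) (range s.1)) ∧
      v ∉ span (ZMod 2) (range s.1)} where
  toFun s := ⟨⟨Fin.tail s.1, (linearIndependent_fin_succ.mp s.2.1).1,
      fun i j => s.2.2 i.succ j.succ⟩,
    ⟨s.1 0, by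
      rw [mem_orthogonal_span_range_iff]
      exact fun i => s.2.2 i.succ 0,
      (linearIndependent_fin_succ.mp s.2.1).2⟩⟩
  invFun x := ⟨Fin.cons x.2.1 x.1.1,
    linearIndependent_fin_cons.mpr ⟨x.1.2.1, x.2.2.2⟩, by
      have hv := (mem_orthogonal_span_range_iff x.1.1 x.2.1).mp x.2.2.1
      intro i j
      induction i using Fin.cases with
      | zero =>
        induction j using Fin.cases with
        | zero => simpa using sympl_self (x.2.1 : V n)
        | succ j => simpa using (sympl_comm (x.2.1 : V n) (x.1.1 j)).trans (hv j)
      | succ i =>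
        induction j using Fin.cases with
        | zero => simpa using hv i
        | succ j => simpa using x.1.2.2 i j⟩
  left_inv s := Subtype.ext (Fin.cons_self_tail s.1)
  right_inv := fun ⟨s, v⟩ => by
    simp only [Fin.cons_zero, Fin.tail_cons, Subtype.coe_eta, Sigma.mk.inj_iff, heq_eq_eq,
      and_self]
    exact ⟨trivial, HEq.rfl⟩

lemma card_IsoT (n : ℕ) : ∀ m, m ≤ n →
    Nat.card (IsoT n m) = ∏ k ∈ Finset.range m, (2 ^ (2 * n - k) - 2 ^ k) := by
  intro m
  induction m with
  | zero =>
    intro _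
    rw [Finset.range_zero, Finset.prod_empty, Nat.card_eq_one_iff_unique]
    constructor
    · constructor
      intro a b
      apply Subtype.ext
      exact Subsingleton.elim _ _
    · exact ⟨fun i => i.elim0, linearIndependent_empty_type, fun i => i.elim0⟩
  | succ m ih =>
    intro hm
    rw [Nat.card_congr (isoEquivStep n m)]
    letI : Fintype (IsoT n m) := Fintype.ofFinite _
    rw [nat_card_sigma]
    have hfib : ∀ s : IsoT n m,
        Nat.card {v : V n // v ∈ (Bf n).orthogonal (span (ZMod 2) (range s.1)) ∧
          v ∉ span (ZMod 2) (range s.1)} = 2 ^ (2 * n - m) - 2 ^ m := by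
      intro s
      have hW : finrank (ZMod 2) (span (ZMod 2) (range s.1)) = m := by
        rw [finrank_span_eq_card s.2.1, Fintype.card_fin]
      have hO : finrank (ZMod 2) ((Bf n).orthogonal (span (ZMod 2) (range s.1))) = 2 * n - m := by
        rw [LinearMap.BilinForm.finrank_orthogonal Bf_nondeg, finrank_V, hW]
      rw [card_diff_submodule _ _ (span_le_orthogonal s.1 s.2.2), hO, hW]
    rw [Finset.sum_congr rfl (fun s _ => hfib s), Finset.sum_const, smul_eq_mul,
      Finset.card_univ, ← Nat.card_eq_fintype_card, ih (Nat.le_of_succ_le hm),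
      Finset.prod_range_succ]

end

section

abbrev SubT (n m : ℕ) := {S : Submodule (ZMod 2) (V n) //
  finrank (ZMod 2) S = m ∧ ∀ P ∈ S, ∀ Q ∈ S, sympl P Q = 0}

def toSub (n m : ℕ) (s : IsoT n m) : SubT n m :=
  ⟨span (ZMod 2) (range s.1),
    by rw [finrank_span_eq_card s.2.1, Fintype.card_fin],
    isotropic_span s.1 s.2.2⟩

def fiberEquiv (n m : ℕ) (S : SubT n m) :
    {s : IsoT n m // toSub n m s = S} ≃ {b : Fin m → S.1 // LinearIndependent (ZMod 2) b} where
  toFun s := ⟨fun i => ⟨s.1.1 i, by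
      have h : span (ZMod 2) (range s.1.1) = S.1 := congrArg Subtype.val s.2
      exact h ▸ subset_span (mem_range_self i)⟩,
    LinearIndependent.of_comp S.1.subtype (by exact s.1.2.1)⟩
  invFun b := ⟨⟨fun i => (b.1 i : V n),
      (by exact b.2.map' S.1.subtype (Submodule.ker_subtype S.1)),
      fun i j => S.2.2 _ (b.1 i).2 _ (b.1 j).2⟩, by
    apply Subtype.ext
    show span (ZMod 2) (range fun i => ((b.1 i : V n))) = S.1
    have hle : span (ZMod 2) (range fun i => ((b.1 i : V n))) ≤ S.1 :=
      span_le.mpr (by rintro _ ⟨i, rfl⟩; exact (b.1 i).2)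
    have hLI : LinearIndependent (ZMod 2) (fun i => ((b.1 i : V n))) := by
      exact b.2.map' S.1.subtype (Submodule.ker_subtype S.1)
    refine Submodule.eq_of_le_of_finrank_le hle ?_
    rw [finrank_span_eq_card hLI, Fintype.card_fin, S.2.1]⟩
  left_inv s := Subtype.ext (Subtype.ext rfl)
  right_inv b := Subtype.ext (funext fun i => Subtype.ext rfl)

lemma card_IsoT_eq_card_SubT (n m : ℕ) :
    Nat.card (IsoT n m) =
      Nat.card (SubT n m) * ∏ k ∈ Finset.range m, (2 ^ m - 2 ^ k) := by
  rw [← Nat.card_congr (Equiv.sigmaFiberEquiv (toSub n m))]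
  letI : Fintype (SubT n m) := Fintype.ofFinite _
  rw [nat_card_sigma]
  have hfib : ∀ S : SubT n m, Nat.card {s : IsoT n m // toSub n m s = S} =
      ∏ k ∈ Finset.range m, (2 ^ m - 2 ^ k) := by
    intro S
    rw [Nat.card_congr (fiberEquiv n m S)]
    have h := card_linearIndependent (K := ZMod 2) (V := S.1) (k := m) (le_of_eq S.2.1.symm)
    rw [h, ZMod.card, S.2.1, ← Fin.prod_univ_eq_prod_range (fun k => 2 ^ m - 2 ^ k) m]
  rw [Finset.sum_congr rfl fun S _ => hfib S, Finset.sum_const, smul_eq_mul,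
    Finset.card_univ, ← Nat.card_eq_fintype_card]

lemma key_count (n m : ℕ) (hm : m ≤ n) :
    Nat.card (SubT n m) * ∏ k ∈ Finset.range m, (2 ^ m - 2 ^ k) =
      ∏ k ∈ Finset.range m, (2 ^ (2 * n - k) - 2 ^ k) := by
  rw [← card_IsoT_eq_card_SubT, card_IsoT n m hm]

end

theorem stmt_18 {n : ℕ} (m : ℕ) (hm : m ≤ n) :
    (Nat.card {S : AddSubgroup (V n) //
        Nat.card S = 2 ^ m ∧ ∀ P ∈ S, ∀ Q ∈ S, sympl P Q = 0} : ℚ)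
      = ∏ k ∈ Finset.range m,
          ((4 : ℚ) ^ n / 2 ^ k - 2 ^ k) / ((2 : ℚ) ^ m - 2 ^ k) := by
  have hA : Nat.card {S : AddSubgroup (V n) //
      Nat.card S = 2 ^ m ∧ ∀ P ∈ S, ∀ Q ∈ S, sympl P Q = 0} = Nat.card (SubT n m) := by
    apply Nat.card_congr
    refine Equiv.subtypeEquiv (AddSubgroup.toZModSubmodule 2 (M := V n)).toEquiv ?_
    intro S
    letI : Fintype (AddSubgroup.toZModSubmodule 2 S) := Fintype.ofFinite _
    have hc : Nat.card S = Nat.card (AddSubgroup.toZModSubmodule 2 S) :=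
      Nat.card_congr (Equiv.subtypeEquivRight fun x => Iff.rfl)
    have hp : Nat.card (AddSubgroup.toZModSubmodule 2 S) =
        2 ^ finrank (ZMod 2) (AddSubgroup.toZModSubmodule 2 S) := by
      rw [Nat.card_eq_fintype_card]
      have := card_eq_pow_finrank (K := ZMod 2) (V := (AddSubgroup.toZModSubmodule 2 S))
      rwa [ZMod.card] at this
    have hcard : Nat.card S = 2 ^ m ↔
        finrank (ZMod 2) (AddSubgroup.toZModSubmodule 2 S) = m := by
      rw [hc, hp]
      exact ⟨fun h => Nat.pow_right_injective (le_refl 2) h, fun h => by rw [h]⟩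
    exact and_congr hcard (Iff.rfl)
  rw [hA]
  have hkey := key_count n m hm
  have cast1 : ((∏ k ∈ Finset.range m, (2 ^ m - 2 ^ k) : ℕ) : ℚ)
      = ∏ k ∈ Finset.range m, ((2:ℚ) ^ m - 2 ^ k) := by
    rw [Nat.cast_prod]
    refine Finset.prod_congr rfl fun k hk => ?_
    rw [Nat.cast_sub (Nat.pow_le_pow_right (by norm_num) (Finset.mem_range.mp hk).le)]
    push_cast; ring
  have cast2 : ((∏ k ∈ Finset.range m, (2 ^ (2 * n - k) - 2 ^ k) : ℕ) : ℚ)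
      = ∏ k ∈ Finset.range m, ((2:ℚ) ^ (2 * n - k) - 2 ^ k) := by
    rw [Nat.cast_prod]
    refine Finset.prod_congr rfl fun k hk => ?_
    have hk' : k ≤ 2 * n - k := by have := Finset.mem_range.mp hk; omega
    rw [Nat.cast_sub (Nat.pow_le_pow_right (by norm_num) hk')]
    push_cast; ring
  have hq : (Nat.card (SubT n m) : ℚ) * ∏ k ∈ Finset.range m, ((2:ℚ) ^ m - 2 ^ k)
      = ∏ k ∈ Finset.range m, ((2:ℚ) ^ (2 * n - k) - 2 ^ k) := by
    rw [← cast1, ← cast2, ← Nat.cast_mul, hkey]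
  have hDne : (∏ k ∈ Finset.range m, ((2:ℚ) ^ m - 2 ^ k)) ≠ 0 := by
    apply Finset.prod_ne_zero_iff.mpr
    intro k hk
    have hlt : (2:ℚ) ^ k < 2 ^ m :=
      pow_lt_pow_right₀ (by norm_num) (Finset.mem_range.mp hk)
    exact sub_ne_zero_of_ne hlt.ne'
  have hfac : ∀ k ∈ Finset.range m,
      ((4:ℚ) ^ n / 2 ^ k - 2 ^ k) / ((2:ℚ) ^ m - 2 ^ k)
        = ((2:ℚ) ^ (2 * n - k) - 2 ^ k) / ((2:ℚ) ^ m - 2 ^ k) := by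
    intro k hk
    have hk2n : k ≤ 2 * n := by have := Finset.mem_range.mp hk; omega
    have h4 : (4:ℚ) ^ n / 2 ^ k = 2 ^ (2 * n - k) := by
      rw [show (4:ℚ) = 2 ^ 2 by norm_num, ← pow_mul,
        pow_sub₀ (2:ℚ) (by norm_num) hk2n, div_eq_mul_inv]
    rw [h4]
  rw [Finset.prod_congr rfl hfac, Finset.prod_div_distrib, eq_div_iff hDne, hq]
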